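/- Let (X_j) be i.i.d. real random variables with E[exp(2cX₁)] < ∞ for some c > 0 and let q ∈ (0,1) satisfy q·E[exp(2cX₁)] < 1. Let S_n = X₁ + ... + X_n and let N be a positive integer-valued random variable with P[N ≥ k] ≤ q^{k−1} for all k. Then E[exp(c S_N)] ≤ q^{−1/2} Σ_{k=1}^∞ (√(q E[exp(2c X₁)]))^k < ∞. -/

import Mathlib

set_option maxHeartbeats 1000000


open MeasureTheory Real Filter

/-- Let `(X_j)` be i.i.d. real random variables with `E[exp (2c X₁)] < ∞` for some
`c > 0`, and let `q ∈ (0,1)` satisfy `q * E[exp (2c X₁)] < 1`. If `Sₙ` is the `n`-th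
partial sum and `N` is a positive integer-valued random variable with
`P[N ≥ k] ≤ q^(k-1)` for all `k ≥ 1`, then
`E[exp (c S_N)] ≤ q^(-1/2) * ∑_{k=1}^∞ (√(q E[exp (2c X₁)]))^k`. -/
theorem exp_stopped_sum_le {Ω : Type*} [MeasurableSpace Ω] (μ : Measure Ω)
    [IsProbabilityMeasure μ] (X : ℕ → Ω → ℝ) (hmeas : ∀ i, Measurable (X i))
    (hindep : ProbabilityTheory.iIndepFun X μ)
    (hident : ∀ i, ProbabilityTheory.IdentDistrib (X i) (X 0) μ μ)
    (c : ℝ) (hc : 0 < c)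
    (hexp : Integrable (fun ω => Real.exp (2 * c * X 0 ω)) μ)
    (q : ℝ) (hq0 : 0 < q) (hq1 : q < 1)
    (hqE : q * ∫ ω, Real.exp (2 * c * X 0 ω) ∂μ < 1)
    (N : Ω → ℕ) (hNmeas : Measurable N) (hNpos : ∀ ω, 1 ≤ N ω)
    (hNtail : ∀ k : ℕ, 1 ≤ k → μ {ω | k ≤ N ω} ≤ ENNReal.ofReal (q ^ (k - 1))) :
    ∫ ω, Real.exp (c * ∑ j ∈ Finset.range (N ω), X j ω) ∂μ
      ≤ q ^ (-(1 : ℝ) / 2) *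
        ∑' k : ℕ, (Real.sqrt (q * ∫ ω, Real.exp (2 * c * X 0 ω) ∂μ)) ^ (k + 1) := by
  set E : ℝ := ∫ ω, Real.exp (2 * c * X 0 ω) ∂μ with hEdef
  have hE0 : 0 < E := integral_exp_pos hexp
  set r : ℝ := Real.sqrt (q * E) with hrdef
  have hr0 : 0 ≤ r := Real.sqrt_nonneg _
  have hqE0 : 0 ≤ q * E := le_of_lt (mul_pos hq0 hE0)
  have hr1 : r < 1 := by
    rw [hrdef, show (1 : ℝ) = Real.sqrt 1 by simp]
    exact Real.sqrt_lt_sqrt hqE0 hqE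
  -- integrability of exp(2c X i) for each i
  have hint : ∀ i, Integrable (fun ω => Real.exp (2 * c * X i ω)) μ := fun i =>
    ((hident i).comp ((measurable_id.const_mul (2 * c)).exp)).integrable_iff.mpr hexp
  -- MGF identity
  have hmgfk : ∀ k : ℕ, ∫ ω, Real.exp (2 * c * ∑ j ∈ Finset.range k, X j ω) ∂μ = E ^ k := by
    intro k
    have h1 := hindep.mgf_sum hmeas (Finset.range k) (t := 2 * c)
    have h2 : ∀ i, ProbabilityTheory.mgf (X i) μ (2 * c) = E := by
      intro i
      exact ((hident i).comp ((measurable_id.const_mul (2 * c)).exp)).integral_eq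
    have h3 : ProbabilityTheory.mgf (∑ i ∈ Finset.range k, X i) μ (2 * c)
        = ∫ ω, Real.exp (2 * c * ∑ j ∈ Finset.range k, X j ω) ∂μ := by
      simp [ProbabilityTheory.mgf, Finset.sum_apply]
    rw [← h3, h1]
    simp [h2]
  have hsqint : ∀ k : ℕ,
      Integrable (fun ω => Real.exp (2 * c * ∑ j ∈ Finset.range k, X j ω)) μ := by
    intro k
    have := hindep.integrable_exp_mul_sum hmeas (s := Finset.range k)
      (t := 2 * c) (fun i _ => hint i)
    simpa [Finset.sum_apply] using this
  -- the partial-sum exponential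
  set g : ℕ → Ω → ℝ := fun k ω => Real.exp (c * ∑ j ∈ Finset.range k, X j ω) with hgdef
  have hgmeas : ∀ k, Measurable (g k) := by
    intro k
    exact ((Finset.measurable_sum (Finset.range k) fun j _ => hmeas j).const_mul c).exp
  have hgpos : ∀ k ω, 0 < g k ω := fun k ω => Real.exp_pos _
  have hgsq : ∀ k ω, g k ω ^ 2 = Real.exp (2 * c * ∑ j ∈ Finset.range k, X j ω) := by
    intro k ω
    rw [hgdef, ← Real.exp_nat_mul]
    ring_nf
  clear_value g
  set F : Ω → ℝ := fun ω => g (N ω) ω with hFdef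
  have hFeq : F = fun ω => Real.exp (c * ∑ j ∈ Finset.range (N ω), X j ω) := by
    rw [hFdef, hgdef]
  rw [← hFeq]
  have hFmeas : Measurable F := by
    have h1 : Measurable (fun p : Ω × ℕ => g p.2 p.1) :=
      measurable_from_prod_countable_left fun k => hgmeas k
    exact h1.comp (measurable_id.prodMk hNmeas)
  have hFpos : ∀ ω, 0 < F ω := fun ω => hgpos _ ω
  -- partition sets
  set A : ℕ → Set Ω := fun k => {ω | N ω = k} with hAdef
  have hAmeas : ∀ k, MeasurableSet (A k) := fun k => hNmeas (measurableSet_singleton k)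
  have hAdis : Pairwise (Function.onFun Disjoint A) := by
    intro i j hij
    simp only [Function.onFun, Set.disjoint_left]
    rintro ω (h1 : N ω = i) (h2 : N ω = j)
    exact hij (h1 ▸ h2 ▸ rfl)
  have hAunion : (⋃ k, A k) = Set.univ := by
    ext ω; simp [hAdef]
  -- decomposition of the lintegral
  have hdecomp : ∫⁻ ω, ENNReal.ofReal (F ω) ∂μ
      = ∑' k : ℕ, ∫⁻ ω in A k, ENNReal.ofReal (F ω) ∂μ := by
    rw [← lintegral_iUnion hAmeas hAdis, hAunion, Measure.restrict_univ]
  -- per-piece bound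
  have hpiece : ∀ k : ℕ, 1 ≤ k →
      ∫⁻ ω in A k, ENNReal.ofReal (F ω) ∂μ
        ≤ ENNReal.ofReal (q ^ (-(1 : ℝ) / 2) * r ^ k) := by
    intro k hk
    have hcongr : ∫⁻ ω in A k, ENNReal.ofReal (F ω) ∂μ
        = ∫⁻ ω in A k, ENNReal.ofReal (g k ω) ∂μ := by
      refine setLIntegral_congr_fun (hAmeas k) (fun ω hω => ?_)
      simp only [hFdef]
      rw [show N ω = k from hω]
    rw [hcongr]
    -- Cauchy-Schwarz via Hölder
    set f1 : Ω → ENNReal := fun ω => ENNReal.ofReal (g k ω) with hf1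
    set f2 : Ω → ENNReal := (A k).indicator (fun _ => 1) with hf2
    have hCS := ENNReal.lintegral_mul_le_Lp_mul_Lq μ ((⟨by norm_num, by norm_num, by norm_num⟩ : Real.HolderConjugate 2 2))
      (ENNReal.measurable_ofReal.comp (hgmeas k)).aemeasurable
      ((measurable_one.indicator (hAmeas k)).aemeasurable (μ := μ))
      (f := f1) (g := f2)
    have hleft : ∫⁻ ω, (f1 * f2) ω ∂μ = ∫⁻ ω in A k, ENNReal.ofReal (g k ω) ∂μ := by
      rw [← lintegral_indicator (hAmeas k)]
      congr 1
      ext ω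
      by_cases hω : ω ∈ A k <;> simp [hf1, hf2, hω, Set.indicator_of_mem, Set.indicator_of_notMem]
    have hf1sq : ∫⁻ ω, f1 ω ^ (2 : ℝ) ∂μ = ENNReal.ofReal (E ^ k) := by
      have : ∀ ω, f1 ω ^ (2 : ℝ) = ENNReal.ofReal (g k ω ^ 2) := by
        intro ω
        rw [hf1, ENNReal.ofReal_rpow_of_nonneg (le_of_lt (hgpos k ω)) (by norm_num)]
        norm_num [Real.rpow_natCast]
      simp_rw [this, hgsq]
      rw [← ofReal_integral_eq_lintegral_ofReal (hsqint k)
        (ae_of_all _ fun ω => le_of_lt (Real.exp_pos _)), hmgfk k]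
    have hf2sq : ∫⁻ ω, f2 ω ^ (2 : ℝ) ∂μ ≤ ENNReal.ofReal (q ^ (k - 1)) := by
      have : ∀ ω, f2 ω ^ (2 : ℝ) = (A k).indicator (fun _ => (1 : ENNReal)) ω := by
        intro ω
        by_cases hω : ω ∈ A k <;>
          simp [hf2, hω, Set.indicator_of_mem, Set.indicator_of_notMem, ENNReal.rpow_natCast]
      simp_rw [this]
      rw [lintegral_indicator (hAmeas k), setLIntegral_one]
      refine le_trans (measure_mono ?_) (hNtail k hk)
      intro ω hω
      exact le_of_eq (hω.symm)
    calc ∫⁻ ω in A k, ENNReal.ofReal (g k ω) ∂μ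
        = ∫⁻ ω, (f1 * f2) ω ∂μ := hleft.symm
      _ ≤ (∫⁻ ω, f1 ω ^ (2:ℝ) ∂μ) ^ (1/(2:ℝ)) * (∫⁻ ω, f2 ω ^ (2:ℝ) ∂μ) ^ (1/(2:ℝ)) := hCS
      _ ≤ (ENNReal.ofReal (E ^ k)) ^ (1/(2:ℝ)) * (ENNReal.ofReal (q ^ (k-1))) ^ (1/(2:ℝ)) :=
          mul_le_mul' (ENNReal.rpow_le_rpow hf1sq.le (by norm_num))
            (ENNReal.rpow_le_rpow hf2sq (by norm_num))
      _ = ENNReal.ofReal ((E ^ k) ^ (1/(2:ℝ)) * (q ^ (k-1)) ^ (1/(2:ℝ))) := by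
          rw [ENNReal.ofReal_rpow_of_nonneg (by positivity) (by norm_num),
            ENNReal.ofReal_rpow_of_nonneg (by positivity) (by norm_num),
            ENNReal.ofReal_mul (by positivity)]
      _ = ENNReal.ofReal (q ^ (-(1 : ℝ) / 2) * r ^ k) := by
          congr 1
          have hsqrtpow : ∀ x : ℝ, 0 ≤ x → ∀ n : ℕ, Real.sqrt (x ^ n) = Real.sqrt x ^ n := by
            intro x hx n
            rw [← Real.rpow_natCast x n, Real.sqrt_eq_rpow, ← Real.rpow_mul hx, mul_comm,
              Real.rpow_mul hx, Real.rpow_natCast, ← Real.sqrt_eq_rpow]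
          have hqk : (q : ℝ) ^ (k - 1) = (q ^ k) * q⁻¹ := by
            rw [eq_comm, mul_comm, inv_mul_eq_iff_eq_mul₀ (ne_of_gt hq0), mul_comm,
              ← pow_succ, Nat.sub_add_cancel hk]
          have hqhalf : q ^ (-(1 : ℝ) / 2) = (Real.sqrt q)⁻¹ := by
            rw [show (-(1:ℝ))/2 = -(1/2 : ℝ) by norm_num, Real.rpow_neg hq0.le,
              ← Real.sqrt_eq_rpow]
          rw [← Real.sqrt_eq_rpow, ← Real.sqrt_eq_rpow, ← Real.sqrt_mul (by positivity), hqk,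
            show E ^ k * (q ^ k * q⁻¹) = (q * E) ^ k * q⁻¹ by rw [mul_pow]; ring,
            Real.sqrt_mul (by positivity), Real.sqrt_inv, hsqrtpow _ hqE0, hqhalf, hrdef,
            mul_comm]
  -- the zero piece
  have hpiece0 : ∫⁻ ω in A 0, ENNReal.ofReal (F ω) ∂μ = 0 := by
    have : A 0 = ∅ := by
      rw [Set.eq_empty_iff_forall_notMem]
      intro ω h
      have h1 := hNpos ω
      have h2 : N ω = 0 := h
      omega
    rw [this, Measure.restrict_empty, lintegral_zero_measure]
  -- summability of the real series
  have hsum : Summable (fun k : ℕ => q ^ (-(1 : ℝ) / 2) * r ^ (k + 1)) := by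
    apply Summable.mul_left
    exact ((summable_geometric_of_lt_one hr0 hr1).mul_left r).congr (fun n => by ring)
  -- total bound
  set Rtot : ℝ := q ^ (-(1 : ℝ) / 2) * ∑' k : ℕ, r ^ (k + 1) with hRdef
  have hRnonneg : 0 ≤ Rtot := by
    apply mul_nonneg (by positivity)
    exact tsum_nonneg fun k => by positivity
  have htotal : ∫⁻ ω, ENNReal.ofReal (F ω) ∂μ ≤ ENNReal.ofReal Rtot := by
    rw [hdecomp, tsum_eq_zero_add' ENNReal.summable, hpiece0, zero_add]
    calc ∑' k : ℕ, ∫⁻ ω in A (k + 1), ENNReal.ofReal (F ω) ∂μ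
        ≤ ∑' k : ℕ, ENNReal.ofReal (q ^ (-(1 : ℝ) / 2) * r ^ (k + 1)) :=
          ENNReal.tsum_le_tsum fun k => hpiece (k + 1) (Nat.le_add_left 1 k)
      _ = ENNReal.ofReal (∑' k : ℕ, q ^ (-(1 : ℝ) / 2) * r ^ (k + 1)) :=
          (ENNReal.ofReal_tsum_of_nonneg (fun k => by positivity) hsum).symm
      _ = ENNReal.ofReal Rtot := by rw [hRdef, tsum_mul_left]
  -- integrability of F
  have hFint : Integrable F μ := by
    refine ⟨hFmeas.aestronglyMeasurable, ?_⟩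
    rw [hasFiniteIntegral_iff_norm]
    calc ∫⁻ ω, ENNReal.ofReal ‖F ω‖ ∂μ = ∫⁻ ω, ENNReal.ofReal (F ω) ∂μ := by
          congr 1; ext ω; rw [Real.norm_of_nonneg (hFpos ω).le]
      _ ≤ ENNReal.ofReal Rtot := htotal
      _ < ⊤ := ENNReal.ofReal_lt_top
  -- conclude
  have hints : ∫ ω, F ω ∂μ = (∫⁻ ω, ENNReal.ofReal (F ω) ∂μ).toReal :=
    integral_eq_lintegral_of_nonneg_ae (ae_of_all _ fun ω => (hFpos ω).le)
      hFmeas.aestronglyMeasurable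
  calc ∫ ω, F ω ∂μ
      = (∫⁻ ω, ENNReal.ofReal (F ω) ∂μ).toReal := hints
    _ ≤ Rtot := ENNReal.toReal_le_of_le_ofReal hRnonneg htotal
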